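/- Let R : ℝ → Matrix (Fin n) (Fin n) ℝ be twice continuously differentiable, and let A solve A'' = R A with A(0) = Id, A'(0) = 0. Then A admits the fourth-order Taylor expansion A(λ) = Id + (λ²/2!)·R(0) + (λ³/3!)·R'(0) + (λ⁴/4!)·(R''(0) + R(0)²) + o(λ⁴) as λ → 0. -/

import Mathlib

open Matrix Asymptotics
open Filter

attribute [local instance] Matrix.normedAddCommGroup Matrix.normedSpace

/-- Integration lemma: derivative little-o bootstraps. -/
lemma key_int {E : Type*} [NormedAddCommGroup E] [NormedSpace ℝ E]
    {f f' : ℝ → E} {k : ℕ} (h0 : f 0 = 0) (hd : ∀ x, HasDerivAt f (f' x) x)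
    (ho : f' =o[nhds 0] fun l : ℝ => l ^ k) :
    f =o[nhds 0] fun l : ℝ => l ^ (k + 1) := by
  rw [Asymptotics.isLittleO_iff] at ho ⊢
  intro ε hε
  rcases Metric.eventually_nhds_iff.mp (ho hε) with ⟨δ, hδ, H⟩
  rw [Metric.eventually_nhds_iff]
  refine ⟨δ, hδ, fun l hl => ?_⟩
  have hseg : ∀ t ∈ segment ℝ (0 : ℝ) l, |t| ≤ |l| := by
    intro t ht
    rcases ht with ⟨a, b, ha, hb, hab, rfl⟩
    simp only [smul_eq_mul, mul_zero, zero_add]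
    rw [abs_mul, abs_of_nonneg hb]
    nlinarith [abs_nonneg l]
  have bound : ∀ t ∈ segment ℝ (0 : ℝ) l, ‖f' t‖ ≤ ε * |l| ^ k := by
    intro t ht
    have h1 : dist t 0 < δ := by
      rw [Real.dist_eq, sub_zero]
      exact lt_of_le_of_lt (hseg t ht) (by simpa [Real.dist_eq] using hl)
    calc ‖f' t‖ ≤ ε * ‖t ^ k‖ := H h1
      _ ≤ ε * |l| ^ k := by
          rw [Real.norm_eq_abs, abs_pow]
          exact mul_le_mul_of_nonneg_left (pow_le_pow_left₀ (abs_nonneg t) (hseg t ht) k) hε.le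
  have := (convex_segment (0:ℝ) l).norm_image_sub_le_of_norm_hasDerivWithin_le
    (f := f) (f' := f') (fun t ht => (hd t).hasDerivWithinAt) bound
    (left_mem_segment ℝ 0 l) (right_mem_segment ℝ 0 l)
  rw [h0, sub_zero, sub_zero, Real.norm_eq_abs] at this
  calc ‖f l‖ ≤ ε * |l| ^ k * |l| := this
    _ = ε * ‖l ^ (k+1)‖ := by rw [Real.norm_eq_abs, abs_pow, pow_succ]; ring

lemma matnorm_mul {n : ℕ} (A B : Matrix (Fin n) (Fin n) ℝ) :
    ‖A * B‖ ≤ n * ‖A‖ * ‖B‖ := by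
  rw [Matrix.norm_le_iff (by positivity)]
  intro i j
  rw [Matrix.mul_apply]
  calc ‖∑ k, A i k * B k j‖ ≤ ∑ k, ‖A i k * B k j‖ := norm_sum_le _ _
    _ ≤ ∑ _k : Fin n, ‖A‖ * ‖B‖ := by
        refine Finset.sum_le_sum fun k _ => ?_
        rw [norm_mul]
        exact mul_le_mul (Matrix.norm_entry_le_entrywise_sup_norm _)
          (Matrix.norm_entry_le_entrywise_sup_norm _) (norm_nonneg _) (norm_nonneg _)
    _ = n * ‖A‖ * ‖B‖ := by simp [Finset.sum_const, mul_assoc]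

lemma mul_littleO_left {n : ℕ} {f h : ℝ → Matrix (Fin n) (Fin n) ℝ} {g : ℝ → ℝ}
    (hf : f =o[nhds 0] g) (hh : ContinuousAt h 0) :
    (fun l => f l * h l) =o[nhds 0] g := by
  refine IsBigO.trans_isLittleO ?_ hf
  rw [Asymptotics.isBigO_iff]
  refine ⟨n * (‖h 0‖ + 1), ?_⟩
  have : ∀ᶠ l in nhds (0:ℝ), ‖h l‖ < ‖h 0‖ + 1 :=
    (hh.norm).eventually_lt_const (by linarith)
  filter_upwards [this] with l hl
  calc ‖f l * h l‖ ≤ n * ‖f l‖ * ‖h l‖ := matnorm_mul _ _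
    _ ≤ n * ‖f l‖ * (‖h 0‖ + 1) := mul_le_mul_of_nonneg_left hl.le (by positivity)
    _ = n * (‖h 0‖ + 1) * ‖f l‖ := by ring

lemma mul_littleO_right {n : ℕ} {f h : ℝ → Matrix (Fin n) (Fin n) ℝ} {g : ℝ → ℝ}
    (hf : f =o[nhds 0] g) (hh : ContinuousAt h 0) :
    (fun l => h l * f l) =o[nhds 0] g := by
  refine IsBigO.trans_isLittleO ?_ hf
  rw [Asymptotics.isBigO_iff]
  refine ⟨n * (‖h 0‖ + 1), ?_⟩
  have : ∀ᶠ l in nhds (0:ℝ), ‖h l‖ < ‖h 0‖ + 1 :=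
    (hh.norm).eventually_lt_const (by linarith)
  filter_upwards [this] with l hl
  calc ‖h l * f l‖ ≤ n * ‖h l‖ * ‖f l‖ := matnorm_mul _ _
    _ = n * ‖f l‖ * ‖h l‖ := by ring
    _ ≤ n * ‖f l‖ * (‖h 0‖ + 1) := mul_le_mul_of_nonneg_left hl.le (by positivity)
    _ = n * (‖h 0‖ + 1) * ‖f l‖ := by ring

lemma smul_const_littleO {E : Type*} [NormedAddCommGroup E] [NormedSpace ℝ E]
    {φ g : ℝ → ℝ} (h : φ =o[nhds 0] g) (M : E) :
    (fun l => φ l • M) =o[nhds 0] g := by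
  rw [Asymptotics.isLittleO_iff] at h ⊢
  intro ε hε
  filter_upwards [h (c := ε / (‖M‖ + 1)) (by positivity)] with l hl
  have hM : (0:ℝ) < ‖M‖ + 1 := by positivity
  rw [norm_smul]
  calc ‖φ l‖ * ‖M‖ ≤ (ε / (‖M‖ + 1)) * ‖g l‖ * ‖M‖ :=
        mul_le_mul_of_nonneg_right hl (norm_nonneg _)
    _ ≤ ε * ‖g l‖ := by
        rw [div_mul_eq_mul_div, div_mul_eq_mul_div, div_le_iff₀ hM]
        nlinarith [norm_nonneg (g l), norm_nonneg M]
/-- Fourth-order Taylor expansion of the bilocal operator `W_XX` near the observer: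
`A(λ) = Id + (λ²/2!)R(0) + (λ³/3!)R'(0) + (λ⁴/4!)(R''(0) + R(0)²) + o(λ⁴)`. -/
theorem wxx_taylor_expansion (n : ℕ)
    (R : ℝ → Matrix (Fin n) (Fin n) ℝ) (hR : ContDiff ℝ 2 R)
    (A : ℝ → Matrix (Fin n) (Fin n) ℝ) (hA : ContDiff ℝ 2 A)
    (hodeA : ∀ l : ℝ, deriv (deriv A) l = R l * A l)
    (hA0 : A 0 = 1) (hA0' : deriv A 0 = 0) :
    (fun l : ℝ => A l - (1 + (l ^ 2 / 2) • R 0 + (l ^ 3 / 6) • deriv R 0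
        + (l ^ 4 / 24) • (deriv (deriv R) 0 + R 0 * R 0)))
      =o[nhds 0] fun l : ℝ => l ^ 4 := by
  -- regularity facts
  have hR2 : ContDiff ℝ ((1:ℕ)+1) R := by exact_mod_cast hR
  obtain ⟨hRd, -, hR1⟩ := contDiff_succ_iff_deriv.mp hR2
  obtain ⟨hRd', hRc''⟩ := contDiff_one_iff_deriv.mp hR1
  have hA2 : ContDiff ℝ ((1:ℕ)+1) A := by exact_mod_cast hA
  obtain ⟨hAd, -, hA1⟩ := contDiff_succ_iff_deriv.mp hA2
  obtain ⟨hAd', -⟩ := contDiff_one_iff_deriv.mp hA1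
  have hone : (fun l : ℝ => l ^ (0:ℕ)) = fun _ : ℝ => (1:ℝ) := by funext l; simp
  -- Taylor remainder of R to order 2
  have hF2 : (fun l => deriv (deriv R) l - deriv (deriv R) 0) =o[nhds 0]
      fun l : ℝ => l ^ (0:ℕ) := by
    rw [hone, Asymptotics.isLittleO_one_iff ℝ]
    have := ((hRc''.tendsto 0).sub (tendsto_const_nhds (x := deriv (deriv R) 0)))
    exact this.mono_right (le_of_eq (congrArg nhds (sub_self _)))
  have hF1 : (fun l => deriv R l - deriv R 0 - l • deriv (deriv R) 0) =o[nhds 0]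
      fun l : ℝ => l ^ (1:ℕ) := by
    refine key_int (by simp) (fun x => ?_) hF2
    have h := ((hRd' x).hasDerivAt.sub_const (deriv R 0)).sub
      ((hasDerivAt_id x).smul_const (deriv (deriv R) 0))
    refine h.congr_deriv ?_
    norm_num
    rfl
  have hF0 : (fun l => R l - R 0 - l • deriv R 0 - (l^2/2) • deriv (deriv R) 0) =o[nhds 0]
      fun l : ℝ => l ^ (2:ℕ) := by
    refine key_int (by simp) (fun x => ?_) hF1
    have h := ((((hRd x).hasDerivAt.sub_const (R 0)).sub
      ((hasDerivAt_id x).smul_const (deriv R 0))).sub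
      (((hasDerivAt_pow 2 x).div_const 2).smul_const (deriv (deriv R) 0)))
    refine h.congr_deriv ?_
    norm_num
    rfl
  -- Taylor remainder of A to order 2
  have hG2 : (fun l => R l * A l - R 0) =o[nhds 0] fun l : ℝ => l ^ (0:ℕ) := by
    rw [hone, Asymptotics.isLittleO_one_iff ℝ]
    have hc : Continuous fun l => R l * A l := (hR.continuous).matrix_mul (hA.continuous)
    have := (hc.tendsto 0).sub (tendsto_const_nhds (x := R 0))
    have e : R 0 * A 0 - R 0 = 0 := by simp [hA0]
    rw [e] at this
    exact this
  have hG1 : (fun l => deriv A l - l • R 0) =o[nhds 0] fun l : ℝ => l ^ (1:ℕ) := by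
    refine key_int (by simp [hA0']) (fun x => ?_) hG2
    have h := ((hAd' x).hasDerivAt.sub ((hasDerivAt_id x).smul_const (R 0)))
    rw [← hodeA x]
    refine h.congr_deriv ?_
    norm_num
    rfl
  have hG0 : (fun l => A l - 1 - (l^2/2) • R 0) =o[nhds 0] fun l : ℝ => l ^ (2:ℕ) := by
    refine key_int (by simp [hA0]) (fun x => ?_) hG1
    have h := (((hAd x).hasDerivAt.sub_const 1).sub
      (((hasDerivAt_pow 2 x).div_const 2).smul_const (R 0)))
    refine h.congr_deriv ?_
    norm_num
    rfl
  -- scalar little-o facts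
  have h1 : (fun l : ℝ => l) =o[nhds 0] (fun _ : ℝ => (1:ℝ)) :=
    (Asymptotics.isLittleO_one_iff ℝ).mpr tendsto_id
  have hl3 : (fun l : ℝ => l^3) =o[nhds 0] fun l : ℝ => l^2 := by
    have := h1.mul_isBigO (isBigO_refl (fun l : ℝ => l^2) (nhds 0))
    simpa [pow_succ, mul_comm, one_mul] using this
  have hl4 : (fun l : ℝ => l^4) =o[nhds 0] fun l : ℝ => l^2 := by
    have := h1.mul_isBigO hl3.isBigO
    simpa [pow_succ, mul_comm, mul_assoc, mul_left_comm, one_mul] using this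
  have hl3' : (fun l : ℝ => l^3/2) =o[nhds 0] fun l : ℝ => l^2 := by
    have := hl3.const_mul_left (1/2)
    simpa [div_eq_mul_inv, mul_comm] using this
  have hl4' : (fun l : ℝ => l^4/4) =o[nhds 0] fun l : ℝ => l^2 := by
    have := hl4.const_mul_left (1/4)
    simpa [div_eq_mul_inv, mul_comm] using this
  -- continuity of the truncated Taylor polynomial of R
  have hQc : ContinuousAt (fun l : ℝ =>
      R 0 + l • deriv R 0 + (l^2/2) • deriv (deriv R) 0) 0 := by fun_prop
  -- second derivative remainder
  have hE2 : (fun l => R l * A l - R 0 - l • deriv R 0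
      - (l^2/2) • (deriv (deriv R) 0 + R 0 * R 0)) =o[nhds 0] fun l : ℝ => l ^ (2:ℕ) := by
    have hid : (fun l => R l * A l - R 0 - l • deriv R 0
        - (l^2/2) • (deriv (deriv R) 0 + R 0 * R 0))
        = fun l => (R l - R 0 - l • deriv R 0 - (l^2/2) • deriv (deriv R) 0) * A l
          + (R 0 + l • deriv R 0 + (l^2/2) • deriv (deriv R) 0) * (A l - 1 - (l^2/2) • R 0)
          + (l^3/2) • (deriv R 0 * R 0) + (l^4/4) • (deriv (deriv R) 0 * R 0) := by
      funext l
      simp only [sub_mul, mul_sub, add_mul, mul_add, mul_one, smul_mul_assoc,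
        mul_smul_comm, smul_smul, smul_add]
      module
    rw [hid]
    exact ((((mul_littleO_left hF0 (hA.continuous.continuousAt)).add
      (mul_littleO_right hG0 hQc)).add
      (smul_const_littleO hl3' _)).add (smul_const_littleO hl4' _))
  -- integrate twice
  have hE1 : (fun l => deriv A l - l • R 0 - (l^2/2) • deriv R 0
      - (l^3/6) • (deriv (deriv R) 0 + R 0 * R 0)) =o[nhds 0] fun l : ℝ => l ^ (3:ℕ) := by
    refine key_int (by simp [hA0']) (fun x => ?_) hE2
    have h := ((((hAd' x).hasDerivAt.sub
      ((hasDerivAt_id x).smul_const (R 0))).sub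
      (((hasDerivAt_pow 2 x).div_const 2).smul_const (deriv R 0))).sub
      (((hasDerivAt_pow 3 x).div_const 6).smul_const (deriv (deriv R) 0 + R 0 * R 0)))
    rw [← hodeA x]
    refine h.congr_deriv ?_
    norm_num
    rw [show (3:ℝ) * x ^ 2 / 6 = x ^ 2 / 2 by ring]
    rfl
  have hE0 : (fun l => A l - 1 - (l^2/2) • R 0 - (l^3/6) • deriv R 0
      - (l^4/24) • (deriv (deriv R) 0 + R 0 * R 0)) =o[nhds 0] fun l : ℝ => l ^ (4:ℕ) := by
    refine key_int (by simp [hA0]) (fun x => ?_) hE1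
    have h := (((((hAd x).hasDerivAt.sub_const 1).sub
      (((hasDerivAt_pow 2 x).div_const 2).smul_const (R 0))).sub
      (((hasDerivAt_pow 3 x).div_const 6).smul_const (deriv R 0))).sub
      (((hasDerivAt_pow 4 x).div_const 24).smul_const (deriv (deriv R) 0 + R 0 * R 0)))
    refine h.congr_deriv ?_
    norm_num
    rw [show (3:ℝ) * x ^ 2 / 6 = x ^ 2 / 2 by ring, show (4:ℝ) * x ^ 3 / 24 = x ^ 3 / 6 by ring]
    rfl
  have : (fun l : ℝ => A l - (1 + (l ^ 2 / 2) • R 0 + (l ^ 3 / 6) • deriv R 0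
      + (l ^ 4 / 24) • (deriv (deriv R) 0 + R 0 * R 0)))
      = fun l => A l - 1 - (l^2/2) • R 0 - (l^3/6) • deriv R 0
      - (l^4/24) • (deriv (deriv R) 0 + R 0 * R 0) := by
    funext l; abel
  rw [this]
  exact hE0
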